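/- Let k_1,...,k_t ≥ 2 be integers, k_i' = k_i - 1, and κ = Σ_{i=1}^t k_i'. Let H be a graph whose vertices are partitioned into two sets U and W with W an independent set (all edges lie within U or between U and W). If H contains a path on 4κ + t vertices, then H contains t pairwise vertex-disjoint paths, the i-th having 2k_i' + 1 vertices, such that all endpoints of all these paths lie in U. -/

import Mathlib

open SimpleGraph

lemma path_getVert_inj {V : Type*} {H : SimpleGraph V} {x y : V} (p : H.Walk x y)
    (hp : p.IsPath) : ∀ m n, m ≤ p.length → n ≤ p.length →
    p.getVert m = p.getVert n → m = n := by
  induction p with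
  | nil => intro m n hm hn _; simp at hm hn; omega
  | cons h q ih =>
    rw [SimpleGraph.Walk.cons_isPath_iff] at hp
    intro m n hm hn heq
    match m, n with
    | 0, 0 => rfl
    | 0, n+1 =>
      exfalso
      apply hp.2
      rw [SimpleGraph.Walk.mem_support_iff_exists_getVert]
      exact ⟨n, by simpa [SimpleGraph.Walk.getVert_cons_succ] using heq.symm,
        by simpa using hn⟩
    | m+1, 0 =>
      exfalso
      apply hp.2
      rw [SimpleGraph.Walk.mem_support_iff_exists_getVert]
      exact ⟨m, by simpa [SimpleGraph.Walk.getVert_cons_succ] using heq,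
        by simpa using hm⟩
    | m+1, n+1 =>
      have := ih hp.1 m n (by simpa using hm) (by simpa using hn)
        (by simpa [SimpleGraph.Walk.getVert_cons_succ] using heq)
      omega

lemma sub_walk {V : Type*} {H : SimpleGraph V} {x y : V} (p : H.Walk x y) :
    ∀ (d a : ℕ), a + d ≤ p.length →
    ∃ q : H.Walk (p.getVert a) (p.getVert (a + d)),
      q.length = d ∧
      q.support = (List.range (d+1)).map (fun n => p.getVert (a+n)) := by
  intro d
  induction d with
  | zero =>
    intro a _
    exact ⟨SimpleGraph.Walk.nil.copy rfl (by simp), by simp,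
      by simp [List.range_succ]⟩
  | succ d ih =>
    intro a ha
    have hadj : H.Adj (p.getVert a) (p.getVert (a+1)) := p.adj_getVert_succ (by omega)
    obtain ⟨q, hql, hqs⟩ := ih (a+1) (by omega)
    refine ⟨(SimpleGraph.Walk.cons hadj q).copy rfl (by congr 1; omega), by simp [hql], ?_⟩
    rw [SimpleGraph.Walk.support_copy, SimpleGraph.Walk.support_cons, hqs]
    conv_rhs => rw [List.range_succ_eq_map]
    simp only [List.map_cons, List.map_map]
    congr 1
    apply List.map_congr_left
    intro n _
    simp only [Function.comp_apply]
    congr 1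
    omega

lemma core_lemma (Uat : ℕ → Prop) (k' : ℕ) (hk : 1 ≤ k') (o L : ℕ) (hL : o + 4*k' ≤ L)
    (hadj : ∀ n, n + 1 ≤ L → Uat n ∨ Uat (n+1)) :
    ∃ a, o ≤ a ∧ a + 2*k' ≤ o + 4*k' ∧ Uat a ∧ Uat (a + 2*k') := by
  have cst : ∀ {a b : ℕ}, a = b → Uat a → Uat b := fun e h => e ▸ h
  have cstn : ∀ {a b : ℕ}, a = b → ¬Uat a → ¬Uat b := fun e h => e ▸ h
  by_contra hcon
  push_neg at hcon
  have hpair : ∀ j, j ≤ 2*k' → ¬Uat (o+j) ∨ ¬Uat (o+j+2*k') := by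
    intro j hj
    by_contra h
    push_neg at h
    exact absurd h.2 (hcon (o+j) (by omega) (by omega) h.1)
  by_cases h0 : Uat o
  · have key : ∀ j, j ≤ k' → ¬Uat (o+2*k'+2*j) := by
      intro j
      induction j with
      | zero =>
        intro _
        rcases hpair 0 (by omega) with h | h
        · exact absurd (cst (by omega) h0) (fun hh => h hh)
        · exact cstn (by omega) h
      | succ j ihj =>
        intro hj
        have hW := ihj (by omega)
        have h1 : Uat (o+2*j+1+2*k') := by
          rcases hadj (o+2*k'+2*j) (by omega) with h | h
          · exact absurd h hW
          · exact cst (by omega) h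
        have h2 : ¬Uat (o+2*j+1) := by
          rcases hpair (2*j+1) (by omega) with h | h
          · exact cstn (by omega) h
          · exact absurd (cst (by omega) h1) h
        have h3 : Uat (o+2*j+2) := by
          rcases hadj (o+2*j+1) (by omega) with h | h
          · exact absurd h h2
          · exact cst (by omega) h
        rcases hpair (2*j+2) (by omega) with h | h
        · exact absurd (cst (by omega) h3) h
        · exact cstn (by omega) h
    obtain ⟨m, hm⟩ : ∃ m, k' = m + 1 := ⟨k'-1, by omega⟩
    have hA : ¬Uat (o+2*k') := cstn (by omega) (key 0 (by omega))
    have hB : Uat (o+2*m+1) := by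
      rcases hadj (o+2*m+1) (by omega) with h | h
      · exact h
      · exact absurd (cst (by omega) h) hA
    have hC : ¬Uat (o+2*m+1+2*k') := by
      rcases hpair (2*m+1) (by omega) with h | h
      · exact absurd (cst (by omega) hB) h
      · exact cstn (by omega) h
    have hD : ¬Uat (o+4*k') := cstn (by omega) (key k' le_rfl)
    rcases hadj (o+2*m+1+2*k') (by omega) with h | h
    · exact hC h
    · exact hD (cst (by omega) h)
  · have key : ∀ j, j ≤ k' → ¬Uat (o+2*j) := by
      intro j
      induction j with
      | zero => intro _; exact cstn (by omega) h0
      | succ j ihj =>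
        intro hj
        have hW := ihj (by omega)
        have h1 : Uat (o+2*j+1) := by
          rcases hadj (o+2*j) (by omega) with h | h
          · exact absurd (cst (by omega) h) hW
          · exact cst (by omega) h
        have h2 : ¬Uat (o+2*j+1+2*k') := by
          rcases hpair (2*j+1) (by omega) with h | h
          · exact absurd (cst (by omega) h1) h
          · exact cstn (by omega) h
        have h3 : Uat (o+2*j+2+2*k') := by
          rcases hadj (o+2*j+1+2*k') (by omega) with h | h
          · exact absurd h h2
          · exact cst (by omega) h
        rcases hpair (2*j+2) (by omega) with h | h
        · exact cstn (by omega) h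
        · exact absurd (cst (by omega) h3) h
    have hA : ¬Uat (o+2*k') := key k' le_rfl
    have hB : Uat (o+1) := by
      rcases hadj o (by omega) with h | h
      · exact absurd h h0
      · exact h
    have hC : ¬Uat (o+1+2*k') := by
      rcases hpair 1 (by omega) with h | h
      · exact absurd hB h
      · exact cstn (by omega) h
    rcases hadj (o+2*k') (by omega) with h | h
    · exact hA h
    · exact hC (cst (by omega) h)


/-- if every edge of `H` has at least one endpoint in `U`
(`W = Uᶜ` is independent), `k i ≥ 2` for all `i`, `κ = ∑ (k i - 1)`, and `H`
contains a path on `4κ + t` vertices (length `4κ + t - 1`), then `H` contains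
`t` pairwise vertex-disjoint paths, the `i`-th on `2(k i - 1) + 1` vertices,
with all endpoints in `U`. -/
theorem stmt2 {V : Type*} (H : SimpleGraph V) (U : Set V)
    (hW : ∀ a b, H.Adj a b → a ∈ U ∨ b ∈ U)
    (t : ℕ) (ht : 1 ≤ t) (k : Fin t → ℕ) (hk : ∀ i, 2 ≤ k i)
    (κ : ℕ) (hκ : κ = ∑ i, (k i - 1))
    (hpath : ∃ (x y : V) (p : H.Walk x y), p.IsPath ∧ p.length = 4 * κ + t - 1) :
    ∃ (u v : Fin t → V) (p : ∀ i, H.Walk (u i) (v i)),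
      (∀ i, u i ∈ U ∧ v i ∈ U ∧ (p i).IsPath ∧ (p i).length = 2 * (k i - 1)) ∧
      ∀ i j, i ≠ j → List.Disjoint (p i).support (p j).support := by
  obtain ⟨x, y, p, hp, hlen⟩ := hpath
  have hκ1 : 1 ≤ κ := by
    rw [hκ]
    calc 1 ≤ ∑ _i : Fin t, 1 := by simp; omega
    _ ≤ ∑ i, (k i - 1) := Finset.sum_le_sum (fun i _ => by have := hk i; omega)
  have hplen : p.length + 1 = 4 * κ + t := by omega
  set f : Fin t → ℕ := fun i => 4 * (k i - 1) + 1 with hf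
  set o : Fin t → ℕ := fun i => ∑ j ∈ Finset.Iio i, f j with ho
  have hsumall : ∑ i, f i = 4 * κ + t := by
    rw [hκ, hf]
    rw [Finset.sum_add_distrib, ← Finset.mul_sum]
    simp
  have hins : ∀ i : Fin t, o i + f i = ∑ j ∈ insert i (Finset.Iio i), f j := by
    intro i
    rw [Finset.sum_insert (by simp)]
    simp only [ho]
    omega
  have hblock : ∀ i, o i + f i ≤ 4 * κ + t := by
    intro i
    rw [hins i, ← hsumall]
    exact Finset.sum_le_sum_of_subset (Finset.subset_univ _)
  have horder : ∀ i j : Fin t, i < j → o i + f i ≤ o j := by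
    intro i j hij
    rw [hins i]
    apply Finset.sum_le_sum_of_subset
    intro m hm
    simp only [Finset.mem_insert, Finset.mem_Iio] at hm ⊢
    rcases hm with rfl | hm
    · exact hij
    · exact hm.trans hij
  set Uat : ℕ → Prop := fun n => p.getVert n ∈ U with hU
  have hadjU : ∀ n, n + 1 ≤ p.length → Uat n ∨ Uat (n + 1) :=
    fun n hn => hW _ _ (p.adj_getVert_succ (by omega))
  have hcore : ∀ i : Fin t, ∃ a, o i ≤ a ∧ a + 2 * (k i - 1) ≤ o i + 4 * (k i - 1) ∧
      Uat a ∧ Uat (a + 2 * (k i - 1)) := by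
    intro i
    apply core_lemma Uat (k i - 1) (by have := hk i; omega) (o i) p.length _ hadjU
    have := hblock i
    simp only [hf] at this
    omega
  choose a ha1 ha2 ha3 ha4 using hcore
  have hub : ∀ i, a i + 2 * (k i - 1) ≤ p.length := by
    intro i
    have h1 := ha2 i
    have h2 := hblock i
    simp only [hf] at h2
    omega
  have hsub : ∀ i, ∃ q : H.Walk (p.getVert (a i)) (p.getVert (a i + 2 * (k i - 1))),
      q.length = 2 * (k i - 1) ∧
      q.support = (List.range (2 * (k i - 1) + 1)).map (fun n => p.getVert (a i + n)) :=
    fun i => sub_walk p _ _ (hub i)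
  choose q hq1 hq2 using hsub
  have hinj := path_getVert_inj p hp
  refine ⟨fun i => p.getVert (a i), fun i => p.getVert (a i + 2 * (k i - 1)), q, ?_, ?_⟩
  · intro i
    refine ⟨ha3 i, ha4 i, ?_, hq1 i⟩
    rw [SimpleGraph.Walk.isPath_def, hq2 i]
    apply List.Nodup.map_on _ List.nodup_range
    intro m hm n hn hmn
    rw [List.mem_range] at hm hn
    have := hinj (a i + m) (a i + n) (by have := hub i; omega) (by have := hub i; omega) hmn
    omega
  · intro i j hij z hz1 hz2
    rw [hq2 i] at hz1
    rw [hq2 j] at hz2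
    obtain ⟨m, hm, hzm⟩ := List.mem_map.mp hz1
    obtain ⟨n, hn, hzn⟩ := List.mem_map.mp hz2
    rw [List.mem_range] at hm hn
    have heq : p.getVert (a i + m) = p.getVert (a j + n) := by rw [hzm, hzn]
    have hidx := hinj (a i + m) (a j + n) (by have := hub i; omega) (by have := hub j; omega) heq
    rcases hij.lt_or_gt with hlt | hlt
    · have h1 := horder i j hlt
      have h2 := ha1 j
      have h3 := ha2 i
      have h4 := ha1 i
      simp only [hf] at h1
      omega
    · have h1 := horder j i hlt
      have h2 := ha1 i
      have h3 := ha2 j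
      have h4 := ha1 j
      simp only [hf] at h1
      omega
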